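/- Let V and S be independent nonnegative random variables, and let θ > 0 be such that E[e^{θV}] < ∞. Then E[e^{θ·(V−S)⁺}] ≤ E[e^{θV}]·E[e^{−θS}] + 1 − E[e^{−θS}], where (x)⁺ = max(x, 0). -/

import Mathlib

open MeasureTheory ProbabilityTheory

/-- Exponential-moment estimate for `(V − S)⁺` with `V, S` independent and nonnegative:
`E[e^{θ(V−S)⁺}] ≤ E[e^{θV}]·E[e^{−θS}] + 1 − E[e^{−θS}]`. -/
theorem stmt5
    {Ω : Type*} [MeasurableSpace Ω] (μ : Measure Ω) [IsProbabilityMeasure μ]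
    (V S : Ω → ℝ) (hV_meas : Measurable V) (hS_meas : Measurable S)
    (hV_nonneg : ∀ ω, 0 ≤ V ω) (hS_nonneg : ∀ ω, 0 ≤ S ω)
    (hindep : IndepFun V S μ)
    (θ : ℝ) (hθ : 0 < θ)
    (hexp : Integrable (fun ω => Real.exp (θ * V ω)) μ) :
    ∫ ω, Real.exp (θ * max (V ω - S ω) 0) ∂μ ≤
      (∫ ω, Real.exp (θ * V ω) ∂μ) * (∫ ω, Real.exp (-θ * S ω) ∂μ)
        + 1 - ∫ ω, Real.exp (-θ * S ω) ∂μ := by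
  have hS1 : ∀ ω, Real.exp (-θ * S ω) ≤ 1 := fun ω => by
    rw [← Real.exp_zero]
    exact Real.exp_le_exp.2 (by nlinarith [hS_nonneg ω])
  have hSpos : ∀ ω, 0 < Real.exp (-θ * S ω) := fun ω => Real.exp_pos _
  -- integrability facts
  have hintS : Integrable (fun ω => Real.exp (-θ * S ω)) μ := by
    apply Integrable.mono' (integrable_const 1)
      ((hS_meas.const_mul (-θ)).exp.aestronglyMeasurable)
    exact Filter.Eventually.of_forall fun ω => by
      rw [Real.norm_eq_abs, abs_of_pos (hSpos ω)]; exact hS1 ω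
  have hintProd : Integrable (fun ω => Real.exp (θ * V ω) * Real.exp (-θ * S ω)) μ := by
    apply Integrable.mono' hexp
      (((hV_meas.const_mul θ).exp.mul (hS_meas.const_mul (-θ)).exp).aestronglyMeasurable)
    refine Filter.Eventually.of_forall fun ω => ?_
    simp only [Pi.mul_apply]
    rw [Real.norm_eq_abs, abs_of_pos (mul_pos (Real.exp_pos _) (Real.exp_pos _))]
    nlinarith [Real.exp_pos (θ * V ω), hS1 ω, hSpos ω]
  have hintL : Integrable (fun ω => Real.exp (θ * max (V ω - S ω) 0)) μ := by
    apply Integrable.mono' hexp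
      (((hV_meas.sub hS_meas).max measurable_const).const_mul θ).exp.aestronglyMeasurable
    refine Filter.Eventually.of_forall fun ω => ?_
    rw [Real.norm_eq_abs, abs_of_pos (Real.exp_pos _)]
    apply Real.exp_le_exp.2
    apply mul_le_mul_of_nonneg_left _ hθ.le
    exact max_le (by simp only [Pi.sub_apply]; linarith [hS_nonneg ω]) (hV_nonneg ω)
  -- pointwise inequality
  have hpt : ∀ ω, Real.exp (θ * max (V ω - S ω) 0) ≤
      Real.exp (θ * V ω) * Real.exp (-θ * S ω) + 1 - Real.exp (-θ * S ω) := by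
    intro ω
    rcases le_or_gt (S ω) (V ω) with h | h
    · rw [max_eq_left (by linarith), ← Real.exp_add]
      have : θ * (V ω - S ω) = θ * V ω + -θ * S ω := by ring
      rw [this]
      linarith [hS1 ω]
    · rw [max_eq_right (by linarith), mul_zero, Real.exp_zero]
      have h1 : 1 ≤ Real.exp (θ * V ω) := by
        rw [← Real.exp_zero]; exact Real.exp_le_exp.2 (by nlinarith [hV_nonneg ω])
      nlinarith [hSpos ω]
  -- independence of the exponentials
  have hmul : ∫ ω, Real.exp (θ * V ω) * Real.exp (-θ * S ω) ∂μ =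
      (∫ ω, Real.exp (θ * V ω) ∂μ) * (∫ ω, Real.exp (-θ * S ω) ∂μ) := by
    have := (hindep.comp (measurable_const_mul θ).exp
      (measurable_const_mul (-θ)).exp).integral_mul_eq_mul_integral hexp.aestronglyMeasurable hintS.aestronglyMeasurable
    simpa [Function.comp] using this
  have hInt : Integrable (fun ω => Real.exp (θ * V ω) * Real.exp (-θ * S ω)
      + 1 - Real.exp (-θ * S ω)) μ := ((hintProd.add (integrable_const 1)).sub hintS)
  calc ∫ ω, Real.exp (θ * max (V ω - S ω) 0) ∂μ
      ≤ ∫ ω, (Real.exp (θ * V ω) * Real.exp (-θ * S ω) + 1 - Real.exp (-θ * S ω)) ∂μ :=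
        integral_mono hintL hInt hpt
    _ = (∫ ω, Real.exp (θ * V ω) ∂μ) * (∫ ω, Real.exp (-θ * S ω) ∂μ)
        + 1 - ∫ ω, Real.exp (-θ * S ω) ∂μ := by
        have h1 := integral_sub (hintProd.add (integrable_const (1:ℝ))) hintS
        have h2 := integral_add hintProd (integrable_const (1:ℝ))
        simp only [Pi.add_apply] at h1 h2
        rw [h1, h2, hmul]
        simp
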